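/- arXiv:2309.01524 — 3 statements merged into one kernel-verified Lean document; each statement's English description precedes it below -/
import Mathlib

section
/- Suppose U and X are linear subspaces and define Ũ = { ũ : ũ(t) ∈ U for all t, H_x[0; ũ](t) ∈ X for all t, H[0; ũ] = 0 }. Then an admissible pair (x0, y) is input redundant if and only if Ũ contains a signal that is not almost everywhere zero. Consequently, if one admissible pair is input redundant, then every admissible pair is input redundant (uniform input redundancy). -/
open MeasureTheory Matrix Set

noncomputable def Hx {n m : ℕ} (A : Matrix (Fin n) (Fin n) ℝ)
    (B : Matrix (Fin n) (Fin m) ℝ) (x0 : Fin n → ℝ) (u : ℝ → Fin m → ℝ) :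
    ℝ → Fin n → ℝ :=
  fun t => NormedSpace.exp (t • A) *ᵥ x0 +
    ∫ τ in (0:ℝ)..t, NormedSpace.exp ((t - τ) • A) *ᵥ (B *ᵥ u τ)

noncomputable def Hout {n m p : ℕ} (A : Matrix (Fin n) (Fin n) ℝ)
    (B : Matrix (Fin n) (Fin m) ℝ) (C : Matrix (Fin p) (Fin n) ℝ)
    (D : Matrix (Fin p) (Fin m) ℝ) (x0 : Fin n → ℝ) (u : ℝ → Fin m → ℝ) :
    ℝ → Fin p → ℝ :=
  fun t => C *ᵥ Hx A B x0 u t + D *ᵥ u t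

/-- Admissibility of a pair `(x0, y)`: some locally integrable input satisfies the
input and state constraints and produces `y` from `x0`. -/
def Adm {n m p : ℕ} (A : Matrix (Fin n) (Fin n) ℝ) (B : Matrix (Fin n) (Fin m) ℝ)
    (C : Matrix (Fin p) (Fin n) ℝ) (D : Matrix (Fin p) (Fin m) ℝ)
    (U : Set (Fin m → ℝ)) (X : Set (Fin n → ℝ)) (x0 : Fin n → ℝ)
    (y : ℝ → Fin p → ℝ) : Prop :=
  ∃ u : ℝ → Fin m → ℝ, LocallyIntegrable u volume ∧
    (∀ t : ℝ, 0 ≤ t → u t ∈ U) ∧ (∀ t : ℝ, 0 ≤ t → Hx A B x0 u t ∈ X) ∧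
    Hout A B C D x0 u = y

/-- Input redundancy of a pair `(x0, y)`: two constraint-satisfying inputs, distinct
on a set of positive measure, produce `y` from `x0`. -/
def IRpair {n m p : ℕ} (A : Matrix (Fin n) (Fin n) ℝ) (B : Matrix (Fin n) (Fin m) ℝ)
    (C : Matrix (Fin p) (Fin n) ℝ) (D : Matrix (Fin p) (Fin m) ℝ)
    (U : Set (Fin m → ℝ)) (X : Set (Fin n → ℝ)) (x0 : Fin n → ℝ)
    (y : ℝ → Fin p → ℝ) : Prop :=
  ∃ u1 u2 : ℝ → Fin m → ℝ,
    LocallyIntegrable u1 volume ∧ LocallyIntegrable u2 volume ∧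
    (∀ t : ℝ, 0 ≤ t → u1 t ∈ U) ∧ (∀ t : ℝ, 0 ≤ t → Hx A B x0 u1 t ∈ X) ∧
    (∀ t : ℝ, 0 ≤ t → u2 t ∈ U) ∧ (∀ t : ℝ, 0 ≤ t → Hx A B x0 u2 t ∈ X) ∧
    Hout A B C D x0 u1 = y ∧ Hout A B C D x0 u2 = y ∧ ¬ u1 =ᵐ[volume] u2

/-- The set `Ũ` of increments: constraint-compatible inputs producing zero output
from zero initial state. -/
def Utilde {n m p : ℕ} (A : Matrix (Fin n) (Fin n) ℝ) (B : Matrix (Fin n) (Fin m) ℝ)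
    (C : Matrix (Fin p) (Fin n) ℝ) (D : Matrix (Fin p) (Fin m) ℝ)
    (U : Set (Fin m → ℝ)) (X : Set (Fin n → ℝ)) : Set (ℝ → Fin m → ℝ) :=
  {ut | LocallyIntegrable ut volume ∧ (∀ t : ℝ, 0 ≤ t → ut t ∈ U) ∧
    (∀ t : ℝ, 0 ≤ t → Hx A B 0 ut t ∈ X) ∧ Hout A B C D 0 ut = 0}


section AuxLemmas

lemma aux_mulVec_norm_le {n m : ℕ} (M : Matrix (Fin n) (Fin m) ℝ) (v : Fin m → ℝ) :
    ‖M *ᵥ v‖ ≤ (∑ i, ∑ j, |M i j|) * ‖v‖ := by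
  have hnn : (0:ℝ) ≤ (∑ i, ∑ j, |M i j|) * ‖v‖ := by positivity
  rw [pi_norm_le_iff_of_nonneg hnn]
  intro i
  calc ‖(M *ᵥ v) i‖ = |∑ j, M i j * v j| := rfl
    _ ≤ ∑ j, |M i j * v j| := Finset.abs_sum_le_sum_abs _ _
    _ ≤ ∑ j, |M i j| * ‖v‖ := by
        refine Finset.sum_le_sum fun j _ => ?_
        rw [abs_mul]
        exact mul_le_mul_of_nonneg_left (norm_le_pi_norm v j) (abs_nonneg _)
    _ = (∑ j, |M i j|) * ‖v‖ := by rw [Finset.sum_mul]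
    _ ≤ (∑ i, ∑ j, |M i j|) * ‖v‖ := by
        refine mul_le_mul_of_nonneg_right ?_ (norm_nonneg _)
        exact Finset.single_le_sum (f := fun i => ∑ j, |M i j|)
          (fun i _ => Finset.sum_nonneg fun j _ => abs_nonneg _) (Finset.mem_univ i)

lemma aux_key_int {n m : ℕ} (f : ℝ → Matrix (Fin n) (Fin m) ℝ) (hf : Continuous f)
    (u : ℝ → Fin m → ℝ) (hu : LocallyIntegrable u volume) (a b : ℝ) :
    IntervalIntegrable (fun τ => f τ *ᵥ u τ) volume a b := by
  rw [intervalIntegrable_iff]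
  have huI : IntegrableOn u (uIoc a b) volume :=
    (hu.integrableOn_isCompact isCompact_uIcc).mono_set Ioc_subset_Icc_self
  have hg : Continuous fun τ => ∑ i, ∑ j, |f τ i j| := by fun_prop
  obtain ⟨Cb, hCb⟩ := isCompact_uIcc.exists_bound_of_continuousOn hg.continuousOn
  have hasm : AEStronglyMeasurable (fun τ => f τ *ᵥ u τ) (volume.restrict (uIoc a b)) := by
    have h1 : AEStronglyMeasurable (fun τ => (τ, u τ)) (volume.restrict (uIoc a b)) :=
      aestronglyMeasurable_id.prodMk huI.aestronglyMeasurable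
    exact ((hf.comp continuous_fst).matrix_mulVec continuous_snd).comp_aestronglyMeasurable h1
  refine Integrable.mono' ((huI.norm.const_mul Cb)) hasm ?_
  refine (ae_restrict_iff' measurableSet_uIoc).mpr ?_
  filter_upwards with τ hτ
  calc ‖f τ *ᵥ u τ‖ ≤ (∑ i, ∑ j, |f τ i j|) * ‖u τ‖ := aux_mulVec_norm_le _ _
    _ ≤ Cb * ‖u τ‖ := by
        refine mul_le_mul_of_nonneg_right ?_ (norm_nonneg _)
        exact (le_abs_self _).trans ((Real.norm_eq_abs _ ▸ hCb τ (Ioc_subset_Icc_self hτ)))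

section
attribute [local instance] Matrix.linftyOpNormedRing Matrix.linftyOpNormedAlgebra
lemma aux_exp_cont' {n : ℕ} (A : Matrix (Fin n) (Fin n) ℝ) (t : ℝ) :
    Continuous fun τ : ℝ => NormedSpace.exp ((t - τ) • A) :=
  NormedSpace.exp_continuous.comp ((continuous_const.sub continuous_id).smul continuous_const)
end

lemma aux_exp_cont {n : ℕ} (A : Matrix (Fin n) (Fin n) ℝ) (t : ℝ) :
    Continuous fun τ : ℝ => NormedSpace.exp ((t - τ) • A) := aux_exp_cont' A t

lemma aux_hx_int {n m : ℕ} (A : Matrix (Fin n) (Fin n) ℝ) (B : Matrix (Fin n) (Fin m) ℝ)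
    (u : ℝ → Fin m → ℝ) (hu : LocallyIntegrable u volume) (t : ℝ) :
    IntervalIntegrable (fun τ => NormedSpace.exp ((t - τ) • A) *ᵥ (B *ᵥ u τ)) volume 0 t := by
  have h : (fun τ => NormedSpace.exp ((t - τ) • A) *ᵥ (B *ᵥ u τ))
      = fun τ => (NormedSpace.exp ((t - τ) • A) * B) *ᵥ u τ := by
    funext τ; rw [Matrix.mulVec_mulVec]
  rw [h]
  exact aux_key_int _ ((aux_exp_cont A t).matrix_mul continuous_const) u hu 0 t

lemma aux_hx_sub {n m : ℕ} (A : Matrix (Fin n) (Fin n) ℝ) (B : Matrix (Fin n) (Fin m) ℝ)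
    (x0 : Fin n → ℝ) (u1 u2 : ℝ → Fin m → ℝ) (hu1 : LocallyIntegrable u1 volume)
    (hu2 : LocallyIntegrable u2 volume) (t : ℝ) :
    Hx A B x0 u1 t - Hx A B x0 u2 t = Hx A B 0 (u1 - u2) t := by
  simp only [Hx, Matrix.mulVec_zero, zero_add]
  have h : (∫ τ in (0:ℝ)..t, NormedSpace.exp ((t - τ) • A) *ᵥ (B *ᵥ (u1 - u2) τ))
      = (∫ τ in (0:ℝ)..t, NormedSpace.exp ((t - τ) • A) *ᵥ (B *ᵥ u1 τ))
        - ∫ τ in (0:ℝ)..t, NormedSpace.exp ((t - τ) • A) *ᵥ (B *ᵥ u2 τ) := by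
    rw [← intervalIntegral.integral_sub (aux_hx_int A B u1 hu1 t) (aux_hx_int A B u2 hu2 t)]
    congr 1; funext τ
    simp [Matrix.mulVec_sub, Pi.sub_apply]
  rw [h]; abel

lemma aux_hout_sub {n m p : ℕ} (A : Matrix (Fin n) (Fin n) ℝ) (B : Matrix (Fin n) (Fin m) ℝ)
    (C : Matrix (Fin p) (Fin n) ℝ) (D : Matrix (Fin p) (Fin m) ℝ)
    (x0 : Fin n → ℝ) (u1 u2 : ℝ → Fin m → ℝ) (hu1 : LocallyIntegrable u1 volume)
    (hu2 : LocallyIntegrable u2 volume) (t : ℝ) :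
    Hout A B C D x0 u1 t - Hout A B C D x0 u2 t = Hout A B C D 0 (u1 - u2) t := by
  simp only [Hout]
  rw [← aux_hx_sub A B x0 u1 u2 hu1 hu2 t]
  simp only [Matrix.mulVec_sub, Pi.sub_apply]
  abel

lemma aux_hx_add {n m : ℕ} (A : Matrix (Fin n) (Fin n) ℝ) (B : Matrix (Fin n) (Fin m) ℝ)
    (x0 : Fin n → ℝ) (u v : ℝ → Fin m → ℝ) (hu : LocallyIntegrable u volume)
    (hv : LocallyIntegrable v volume) (t : ℝ) :
    Hx A B x0 (u + v) t = Hx A B x0 u t + Hx A B 0 v t := by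
  have h := aux_hx_sub A B x0 (u + v) u (hu.add hv) hu t
  rw [add_sub_cancel_left] at h
  rw [← h]; abel

lemma aux_hout_add {n m p : ℕ} (A : Matrix (Fin n) (Fin n) ℝ) (B : Matrix (Fin n) (Fin m) ℝ)
    (C : Matrix (Fin p) (Fin n) ℝ) (D : Matrix (Fin p) (Fin m) ℝ)
    (x0 : Fin n → ℝ) (u v : ℝ → Fin m → ℝ) (hu : LocallyIntegrable u volume)
    (hv : LocallyIntegrable v volume) (t : ℝ) :
    Hout A B C D x0 (u + v) t = Hout A B C D x0 u t + Hout A B C D 0 v t := by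
  have h := aux_hout_sub A B C D x0 (u + v) u (hu.add hv) hu t
  rw [add_sub_cancel_left] at h
  rw [← h]; abel

end AuxLemmas

/-- with `U`, `X` linear subspaces, an admissible pair is input
redundant iff `Ũ` contains a signal which is not a.e. zero; consequently input
redundancy of one admissible pair implies it for all admissible pairs. -/
theorem stmt9 {n m p : ℕ} (A : Matrix (Fin n) (Fin n) ℝ)
    (B : Matrix (Fin n) (Fin m) ℝ) (C : Matrix (Fin p) (Fin n) ℝ)
    (D : Matrix (Fin p) (Fin m) ℝ)
    (U : Submodule ℝ (Fin m → ℝ)) (X : Submodule ℝ (Fin n → ℝ)) :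
    (∀ (x0 : Fin n → ℝ) (y : ℝ → Fin p → ℝ),
      Adm A B C D (U : Set (Fin m → ℝ)) (X : Set (Fin n → ℝ)) x0 y →
        (IRpair A B C D (U : Set (Fin m → ℝ)) (X : Set (Fin n → ℝ)) x0 y ↔
          ∃ ut ∈ Utilde A B C D (U : Set (Fin m → ℝ)) (X : Set (Fin n → ℝ)),
            ¬ ut =ᵐ[volume] 0)) ∧
    ((∃ (x0 : Fin n → ℝ) (y : ℝ → Fin p → ℝ),
        Adm A B C D (U : Set (Fin m → ℝ)) (X : Set (Fin n → ℝ)) x0 y ∧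
        IRpair A B C D (U : Set (Fin m → ℝ)) (X : Set (Fin n → ℝ)) x0 y) →
      ∀ (x0 : Fin n → ℝ) (y : ℝ → Fin p → ℝ),
        Adm A B C D (U : Set (Fin m → ℝ)) (X : Set (Fin n → ℝ)) x0 y →
        IRpair A B C D (U : Set (Fin m → ℝ)) (X : Set (Fin n → ℝ)) x0 y)  := by
  have hfwd : ∀ (x0 : Fin n → ℝ) (y : ℝ → Fin p → ℝ),
      IRpair A B C D (U : Set (Fin m → ℝ)) (X : Set (Fin n → ℝ)) x0 y →
      ∃ ut ∈ Utilde A B C D (U : Set (Fin m → ℝ)) (X : Set (Fin n → ℝ)),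
        ¬ ut =ᵐ[volume] 0 := by
    rintro x0 y ⟨u1, u2, h1, h2, hU1, hX1, hU2, hX2, hy1, hy2, hne⟩
    refine ⟨u1 - u2, ⟨h1.sub h2, ?_, ?_, ?_⟩, ?_⟩
    · intro t ht
      exact U.sub_mem (hU1 t ht) (hU2 t ht)
    · intro t ht
      rw [← aux_hx_sub A B x0 u1 u2 h1 h2 t]
      exact X.sub_mem (hX1 t ht) (hX2 t ht)
    · funext t
      rw [← aux_hout_sub A B C D x0 u1 u2 h1 h2 t, hy1, hy2]
      simp
    · intro h
      apply hne
      filter_upwards [h] with x hx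
      have hx' : u1 x - u2 x = 0 := hx
      exact sub_eq_zero.mp hx'
  have hbwd : ∀ (x0 : Fin n → ℝ) (y : ℝ → Fin p → ℝ),
      Adm A B C D (U : Set (Fin m → ℝ)) (X : Set (Fin n → ℝ)) x0 y →
      (∃ ut ∈ Utilde A B C D (U : Set (Fin m → ℝ)) (X : Set (Fin n → ℝ)),
        ¬ ut =ᵐ[volume] 0) →
      IRpair A B C D (U : Set (Fin m → ℝ)) (X : Set (Fin n → ℝ)) x0 y := by
    rintro x0 y ⟨u, hu, hU, hX, hy⟩ ⟨ut, ⟨hloc, hUt, hXt, hHt⟩, hne0⟩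
    refine ⟨u, u + ut, hu, hu.add hloc, hU, hX, ?_, ?_, hy, ?_, ?_⟩
    · intro t ht
      exact U.add_mem (hU t ht) (hUt t ht)
    · intro t ht
      rw [aux_hx_add A B x0 u ut hu hloc t]
      exact X.add_mem (hX t ht) (hXt t ht)
    · funext t
      rw [aux_hout_add A B C D x0 u ut hu hloc t]
      have h0 : Hout A B C D 0 ut t = 0 := by rw [hHt]; rfl
      rw [h0, hy, add_zero]
    · intro h
      apply hne0
      filter_upwards [h] with x hx
      have hx' : u x = u x + ut x := hx
      have : ut x = 0 := by
        have := hx'.symm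
        rwa [add_eq_left] at this
      exact this
  refine ⟨fun x0 y hadm => ⟨hfwd x0 y, hbwd x0 y hadm⟩, ?_⟩
  rintro ⟨x0', y', _, hir⟩ x0 y hadm
  exact hbwd x0 y hadm (hfwd x0' y' hir)
end

section
/- For the two-buck-converter system ẋ = Ax + Bu with A = [[0,0,-1/L],[0,0,-1/L],[1/C,1/C,-1/(RC)]], B = (V/L)·[[1,0],[0,1],[0,0]], output y = x3, and any initial state x0 ∈ ℝ³: the inputs u1(t) = (max(1−t,0), min(t,1)) and u2(t) = (1, 0) produce identical output trajectories y1 = y2, while u1 ≠ u2 on a positive-measure set. -/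
open Matrix MeasureTheory

lemma max_add_min_eq (t : ℝ) : max (1 - t) 0 + min t 1 = 1 := by
  rcases le_total t 1 with h | h
  · rw [max_eq_left (by linarith), min_eq_left h]; ring
  · rw [max_eq_right (by linarith), min_eq_right h]; ring

/-- for the two parallel buck converters, the inputs
`u1(t) = (max(1−t,0), min(t,1))` and `u2(t) = (1,0)` produce identical output
trajectories `y = x₃` from any common initial state, while differing on a set of
positive measure. -/
theorem stmt12 (Lc Cc Rc V : ℝ) (hL : 0 < Lc) (hC : 0 < Cc) (hR : 0 < Rc)
    (hV : 0 < V)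
    (A : Matrix (Fin 3) (Fin 3) ℝ)
    (hA : A = !![0, 0, -(1/Lc); 0, 0, -(1/Lc); 1/Cc, 1/Cc, -(1/(Rc*Cc))])
    (B : Matrix (Fin 3) (Fin 2) ℝ)
    (hB : B = (V/Lc) • !![1, 0; 0, 1; 0, 0])
    (u1 u2 : ℝ → Fin 2 → ℝ)
    (hu1 : u1 = fun t => ![max (1 - t) 0, min t 1])
    (hu2 : u2 = fun t => ![1, 0])
    (x0 : Fin 3 → ℝ) (x1 x2 : ℝ → Fin 3 → ℝ)
    (hx10 : x1 0 = x0) (hx20 : x2 0 = x0)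
    (hx1 : ∀ t : ℝ, HasDerivAt x1 (A *ᵥ x1 t + B *ᵥ u1 t) t)
    (hx2 : ∀ t : ℝ, HasDerivAt x2 (A *ᵥ x2 t + B *ᵥ u2 t) t) :
    (∀ t : ℝ, 0 ≤ t → x1 t 2 = x2 t 2) ∧
      0 < volume {t : ℝ | 0 ≤ t ∧ u1 t ≠ u2 t} := by
  constructor
  · -- the linear map governing (s, z) = (d₁ + d₂, d₃) where d = x1 - x2
    set F : (ℝ × ℝ) →L[ℝ] (ℝ × ℝ) :=
      ((-(2/Lc)) • ContinuousLinearMap.snd ℝ ℝ ℝ).prod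
        ((1/Cc) • ContinuousLinearMap.fst ℝ ℝ ℝ +
          (-(1/(Rc*Cc))) • ContinuousLinearMap.snd ℝ ℝ ℝ) with hF
    set g : ℝ → ℝ × ℝ := fun t =>
      (x1 t 0 + x1 t 1 - x2 t 0 - x2 t 1, x1 t 2 - x2 t 2) with hg
    -- componentwise derivatives
    have comp1 : ∀ (t : ℝ) (i : Fin 3),
        HasDerivAt (fun t => x1 t i) ((A *ᵥ x1 t + B *ᵥ u1 t) i) t := by
      intro t i; exact hasDerivAt_pi.1 (hx1 t) i
    have comp2 : ∀ (t : ℝ) (i : Fin 3),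
        HasDerivAt (fun t => x2 t i) ((A *ᵥ x2 t + B *ᵥ u2 t) i) t := by
      intro t i; exact hasDerivAt_pi.1 (hx2 t) i
    have hg' : ∀ t : ℝ, HasDerivAt g (F (g t)) t := by
      intro t
      have h1 := (((comp1 t 0).add (comp1 t 1)).sub (comp2 t 0)).sub (comp2 t 1)
      have h2 := (comp1 t 2).sub (comp2 t 2)
      have hd := HasDerivAt.prodMk h1 h2
      convert hd using 1
      · rfl
      have e1 : (A *ᵥ x1 t + B *ᵥ u1 t) 0 + (A *ᵥ x1 t + B *ᵥ u1 t) 1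
          - (A *ᵥ x2 t + B *ᵥ u2 t) 0 - (A *ᵥ x2 t + B *ᵥ u2 t) 1
          = -(2/Lc) * (x1 t 2 - x2 t 2) := by
        have key := max_add_min_eq t
        simp [hA, hB, hu1, hu2, Matrix.mulVec, dotProduct,
          Fin.sum_univ_succ]
        linear_combination (V / Lc) * key
      have e2 : (A *ᵥ x1 t + B *ᵥ u1 t) 2 - (A *ᵥ x2 t + B *ᵥ u2 t) 2
          = (1/Cc) * (x1 t 0 + x1 t 1 - x2 t 0 - x2 t 1)
            + (-(1/(Rc*Cc))) * (x1 t 2 - x2 t 2) := by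
        simp [hA, hB, hu1, hu2, Matrix.mulVec, dotProduct,
          Fin.sum_univ_succ]
        ring
      simp only [hF, hg, ContinuousLinearMap.prod_apply,
        ContinuousLinearMap.add_apply, ContinuousLinearMap.smul_apply,
        ContinuousLinearMap.coe_fst', ContinuousLinearMap.coe_snd',
        smul_eq_mul]
      exact Prod.ext (by rw [← e1]) (by rw [← e2])
    -- uniqueness against the zero solution on [0, T]
    intro T hT
    have h0 : g 0 = (0 : ℝ × ℝ) := by
      simp [hg, hx10, hx20]
    have key : g T = 0 := by
      rcases eq_or_lt_of_le hT with h | h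
      · rw [← h]; exact h0
      · have := ODE_solution_unique (v := fun _ p => F p) (K := ‖F‖₊)
          (f := g) (g := fun _ => (0 : ℝ × ℝ)) (a := 0) (b := T)
          (fun _ => F.lipschitz)
          (fun t _ => ((hg' t).continuousAt).continuousWithinAt)
          (fun t _ => ((hg' t).hasDerivWithinAt))
          continuousOn_const
          (fun t _ => by
            simpa [map_zero] using (hasDerivWithinAt_const t (Set.Ici t) (0 : ℝ × ℝ)))
          (by simpa using h0)
        simpa using this ⟨hT, le_refl T⟩
    have h2 : x1 T 2 - x2 T 2 = 0 := by
      have := congrArg Prod.snd key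
      simpa [hg] using this
    linarith
  · -- u1 ≠ u2 on (0,1), a set of measure 1
    have hsub : Set.Ioo (0:ℝ) 1 ⊆ {t : ℝ | 0 ≤ t ∧ u1 t ≠ u2 t} := by
      intro t ht
      refine ⟨le_of_lt ht.1, ?_⟩
      intro h
      have := congrFun h 1
      simp [hu1, hu2, min_eq_left ht.2.le] at this
      linarith [ht.1]
    calc (0 : ENNReal) < volume (Set.Ioo (0:ℝ) 1) := by simp
      _ ≤ _ := measure_mono hsub
end

section
/- Suppose the unconstrained LTI system Σ is input redundant and ρ := dim(ker B ∩ ker D) > 0, and suppose the input constraint set U ⊆ ℝ^m is open (with X = ℝ^n unconstrained, or more generally X open with ρ > 0). Then every admissible pair (x0, y) of the constrained system is input redundant; i.e., the constrained system is uniformly input redundant. -/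
open MeasureTheory Matrix Set

/-- if the unconstrained system `Σ` is input redundant,
`ρ = dim(ker B ∩ ker D) > 0`, and the constraint sets `U` and `X` are open, then
every admissible pair of the constrained system is input redundant (uniform input
redundancy). -/
theorem stmt17 {n m p : ℕ} (A : Matrix (Fin n) (Fin n) ℝ)
    (B : Matrix (Fin n) (Fin m) ℝ) (C : Matrix (Fin p) (Fin n) ℝ)
    (D : Matrix (Fin p) (Fin m) ℝ)
    (U : Set (Fin m → ℝ)) (X : Set (Fin n → ℝ))
    (hU : IsOpen U) (hX : IsOpen X)
    (hρ : 0 < Module.finrank ℝ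
      ↥(LinearMap.ker (Matrix.toLin' B) ⊓ LinearMap.ker (Matrix.toLin' D)))
    (hIRSigma : ∃ (x0 : Fin n → ℝ) (u1 u2 : ℝ → Fin m → ℝ),
      LocallyIntegrable u1 volume ∧ LocallyIntegrable u2 volume ∧
      ¬ u1 =ᵐ[volume] u2 ∧ Hout A B C D x0 u1 = Hout A B C D x0 u2) :
    ∀ (x0 : Fin n → ℝ) (y : ℝ → Fin p → ℝ),
      Adm A B C D U X x0 y → IRpair A B C D U X x0 y := by
  classical
  intro x0 y hadm
  obtain ⟨u, hu, hUmem, hXmem, hHout⟩ := hadm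
  -- get a nonzero vector v in ker B ∩ ker D
  obtain ⟨v, hvB, hvD, hv0⟩ : ∃ v : Fin m → ℝ, B *ᵥ v = 0 ∧ D *ᵥ v = 0 ∧ v ≠ 0 := by
    rw [Module.finrank_pos_iff] at hρ
    obtain ⟨w, hw⟩ := exists_ne
      (0 : ↥(LinearMap.ker (Matrix.toLin' B) ⊓ LinearMap.ker (Matrix.toLin' D)))
    obtain ⟨hwB, hwD⟩ := Submodule.mem_inf.mp w.2
    refine ⟨w.1, ?_, ?_, ?_⟩
    · have := LinearMap.mem_ker.mp hwB; rwa [Matrix.toLin'_apply] at this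
    · have := LinearMap.mem_ker.mp hwD; rwa [Matrix.toLin'_apply] at this
    · intro h; exact hw (Subtype.ext h)
  set e : ℝ := if (Uᶜ : Set (Fin m → ℝ)).Nonempty then 0 else 1 with he
  set f : (Fin m → ℝ) → ℝ := fun x => min (Metric.infDist x Uᶜ + e) 1 with hf
  set c : (Fin m → ℝ) → ℝ := fun x => f x / (2 * (‖v‖ + 1)) with hc
  have hvpos : (0:ℝ) < 2 * (‖v‖ + 1) := by positivity
  have hfnonneg : ∀ x, 0 ≤ f x := by
    intro x
    have h1 : (0:ℝ) ≤ Metric.infDist x Uᶜ := Metric.infDist_nonneg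
    have h2 : (0:ℝ) ≤ e := by by_cases h : (Uᶜ : Set (Fin m → ℝ)).Nonempty <;> simp [he, h]
    simp only [hf]
    exact le_min (by linarith) one_pos.le
  have hfle : ∀ x, f x ≤ 1 := fun x => min_le_right _ _
  have hfpos : ∀ x ∈ U, 0 < f x := by
    intro x hx
    by_cases h : (Uᶜ : Set (Fin m → ℝ)).Nonempty
    · have hd : 0 < Metric.infDist x Uᶜ :=
        (hU.isClosed_compl.notMem_iff_infDist_pos h).mp (by simpa using hx)
      simp only [hf, he, if_pos h]
      exact lt_min (by linarith) one_pos
    · simp only [hf, he, if_neg h]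
      have : (0:ℝ) ≤ Metric.infDist x Uᶜ := Metric.infDist_nonneg
      exact lt_min (by linarith) one_pos
  have hcpos : ∀ x ∈ U, 0 < c x := fun x hx => div_pos (hfpos x hx) hvpos
  have hcnonneg : ∀ x, 0 ≤ c x := fun x => div_nonneg (hfnonneg x) hvpos.le
  -- the perturbed point stays in U
  have hmemU : ∀ x ∈ U, x + c x • v ∈ U := by
    intro x hx
    by_cases h : (Uᶜ : Set (Fin m → ℝ)).Nonempty
    · by_contra hnot
      have hmem : x + c x • v ∈ (Uᶜ : Set (Fin m → ℝ)) := hnot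
      have hdle : Metric.infDist x Uᶜ ≤ dist x (x + c x • v) :=
        Metric.infDist_le_dist_of_mem hmem
      have hdist : dist x (x + c x • v) = c x * ‖v‖ := by
        rw [dist_eq_norm]
        have : x - (x + c x • v) = -(c x • v) := by abel
        rw [this, norm_neg, norm_smul, Real.norm_eq_abs, abs_of_nonneg (hcnonneg x)]
      have hfx : 0 < f x := hfpos x hx
      have hfled : f x ≤ Metric.infDist x Uᶜ := by
        simp only [hf, he, if_pos h, add_zero]
        exact min_le_left _ _
      have hlt : c x * ‖v‖ < f x := by
        have h1 : c x * ‖v‖ ≤ f x / (2 * (‖v‖ + 1)) * (‖v‖ + 1) := by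
          apply mul_le_mul_of_nonneg_left (by linarith) (hcnonneg x)
        have h2 : f x / (2 * (‖v‖ + 1)) * (‖v‖ + 1) = f x / 2 := by
          field_simp
        rw [h2] at h1
        linarith
      linarith [hdle, hdist ▸ hdle]
    · have : (Uᶜ : Set (Fin m → ℝ)) = ∅ := Set.not_nonempty_iff_eq_empty.mp h
      have hUuniv : U = Set.univ := by
        rw [← Set.compl_empty, ← this, compl_compl]
      rw [hUuniv]; trivial
  -- define the perturbed input
  set g : ℝ → ℝ := Set.indicator (Set.Ici (0:ℝ)) (fun t => c (u t)) with hg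
  set u2 : ℝ → Fin m → ℝ := fun t => u t + g t • v with hu2
  have hgval : ∀ t : ℝ, 0 ≤ t → g t = c (u t) := by
    intro t ht; simp [hg, Set.indicator_of_mem (Set.mem_Ici.mpr ht)]
  -- B and D kill the perturbation
  have hBu2 : ∀ τ, B *ᵥ u2 τ = B *ᵥ u τ := by
    intro τ
    simp only [hu2]
    rw [Matrix.mulVec_add, Matrix.mulVec_smul, hvB, smul_zero, add_zero]
  have hDu2 : ∀ τ, D *ᵥ u2 τ = D *ᵥ u τ := by
    intro τ
    simp only [hu2]
    rw [Matrix.mulVec_add, Matrix.mulVec_smul, hvD, smul_zero, add_zero]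
  have hHx : Hx A B x0 u2 = Hx A B x0 u := by
    funext t
    unfold Hx
    congr 1
    exact intervalIntegral.integral_congr (fun τ _ => by rw [hBu2 τ])
  have hHout2 : Hout A B C D x0 u2 = Hout A B C D x0 u := by
    funext t
    unfold Hout
    rw [hHx, hDu2 t]
  -- local integrability of u2
  have humeas : AEStronglyMeasurable u volume := hu.aestronglyMeasurable
  have hcont : Continuous c := by
    simp only [hc, hf]
    exact (((Metric.continuous_infDist_pt _).add continuous_const).min
      continuous_const).div_const _
  have hgmeas : AEStronglyMeasurable g volume :=
    (hcont.comp_aestronglyMeasurable humeas).indicator measurableSet_Ici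
  have hpert_li : LocallyIntegrable (fun t => g t • v) volume := by
    rw [MeasureTheory.locallyIntegrable_iff]
    intro k hk
    refine ⟨(hgmeas.smul_const v).restrict, ?_⟩
    haveI : IsFiniteMeasure (volume.restrict k) :=
      ⟨by rw [Measure.restrict_apply_univ]; exact hk.measure_lt_top⟩
    apply MeasureTheory.HasFiniteIntegral.of_bounded (C := 1 * ‖v‖)
    refine Filter.Eventually.of_forall fun t => ?_
    rw [norm_smul, Real.norm_eq_abs]
    apply mul_le_mul_of_nonneg_right _ (norm_nonneg v)
    by_cases ht : t ∈ Set.Ici (0:ℝ)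
    · rw [hg, Set.indicator_of_mem ht, abs_of_nonneg (hcnonneg _)]
      have : c (u t) ≤ 1 := by
        rw [hc, div_le_one hvpos]
        nlinarith [hfle (u t), norm_nonneg v]
      exact this
    · rw [hg, Set.indicator_of_notMem ht]; simp
  have hu2li : LocallyIntegrable u2 volume := hu.add hpert_li
  -- u2 satisfies the input constraint
  have hU2mem : ∀ t : ℝ, 0 ≤ t → u2 t ∈ U := by
    intro t ht
    simp only [hu2]
    rw [hgval t ht]
    exact hmemU (u t) (hUmem t ht)
  -- u2 differs from u on [0,∞)
  have hne : ¬ u =ᵐ[volume] u2 := by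
    intro hae
    have hsub : Set.Ici (0:ℝ) ⊆ {t | u t ≠ u2 t} := by
      intro t ht
      simp only [Set.mem_setOf_eq, hu2]
      intro habs
      have : g t • v = 0 := by
        have := congrArg (fun w => w - u t) habs
        simpa using this.symm
      rcases smul_eq_zero.mp this with h | h
      · rw [hgval t ht] at h
        exact absurd h (ne_of_gt (hcpos _ (hUmem t ht)))
      · exact hv0 h
    have hnull : volume {t | u t ≠ u2 t} = 0 := by
      have : {t | u t = u2 t}ᶜ = {t | u t ≠ u2 t} := by ext t; simp
      rw [← this]
      exact hae
    have : volume (Set.Ici (0:ℝ)) = 0 := measure_mono_null hsub hnull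
    rw [Real.volume_Ici] at this
    exact absurd this (by simp)
  exact ⟨u, u2, hu, hu2li, hUmem, hXmem, hU2mem,
    (by rw [hHx]; exact hXmem), (hHout), (by rw [hHout2]; exact hHout), hne⟩
end
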